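/- Let G' be a finite directed graph with nonnegative edge weights containing a directed path P₂ of total length 0 and a sequence P₁ of distinct vertices disjoint from P₂ equipped with a linear order ≤_{P₁}, such that no vertex of P₁ has an outgoing edge in G' and every edge of G' whose head lies on P₂ is an edge of P₂. Let β > 0. For a vertex v of P₂ write v_f = dfirst_{G'}(v,P₁,β) when it exists, and let B be the set of pairs (v, v_f) with v on P₂ and v_f defined such that there is no vertex u of P₂ with v <_{P₂} u, u_f defined, and u_f ≤_{P₁} v_f (the maximal pairs). Then for every vertex b of P₂ for which b_f is defined, there exists a pair (u, u_f) ∈ B with b ≤_{P₂} u and u_f = b_f; consequently there is a walk of length at most β from b to b_f consisting of the subpath P₂[b,u] followed by a walk from u to u_f of length at most β. -/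

import Mathlib

/-- A walk in the directed graph with edge relation `E`: a nonempty list of vertices
starting at `u`, ending at `v`, with every consecutive pair an edge. -/
def IsWalk {V : Type*} (E : V → V → Prop) (l : List V) (u v : V) : Prop :=
  l ≠ [] ∧ l.head? = some u ∧ l.getLast? = some v ∧ l.Chain' E

/-- The length of a walk: the sum of the weights of its consecutive pairs. -/
def walkLen {V : Type*} (w : V → V → ℝ) (l : List V) : ℝ :=
  ((l.zip l.tail).map fun q => w q.1 q.2).sum

/-- `b` is `dfirst_G(v,Q,β)`: the `≤_Q`-least vertex of the ordered vertex list `q`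
reachable from `v` by a walk of length at most `β`. -/
def IsDFirst {V : Type*} [DecidableEq V] (E : V → V → Prop) (w : V → V → ℝ)
    (v : V) (q : List V) (β : ℝ) (b : V) : Prop :=
  b ∈ q ∧ (∃ l, IsWalk E l v b ∧ walkLen w l ≤ β) ∧
    ∀ c ∈ q, (∃ l, IsWalk E l v c ∧ walkLen w l ≤ β) → q.idxOf b ≤ q.idxOf c

/-- `(v, vf)` is a maximal pair: `vf = dfirst(v,P₁,β)` and there is no `u` strictly
later than `v` on `P₂` with `u_f` defined and `u_f ≤_{P₁} vf`. -/
def MaximalPair {V : Type*} [DecidableEq V] (E : V → V → Prop) (w : V → V → ℝ)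
    (p₂ p₁ : List V) (β : ℝ) (v vf : V) : Prop :=
  v ∈ p₂ ∧ IsDFirst E w v p₁ β vf ∧
    ¬ ∃ u uf, u ∈ p₂ ∧ p₂.idxOf v < p₂.idxOf u ∧
      IsDFirst E w u p₁ β uf ∧ p₁.idxOf uf ≤ p₁.idxOf vf

/-- Prepending a vertex `x` with an edge to the start of a walk. -/
lemma walk_cons {V : Type*} (E : V → V → Prop) (w : V → V → ℝ) {l : List V} {a c x : V}
    (hl : IsWalk E l a c) (hx : E x a) :
    IsWalk E (x :: l) x c ∧ walkLen w (x :: l) = w x a + walkLen w l := by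
  obtain ⟨hne, hhd, hlast, hch⟩ := hl
  cases l with
  | nil => simp at hne
  | cons y t =>
    simp only [List.head?_cons, Option.some.injEq] at hhd
    subst hhd
    refine ⟨⟨by simp, rfl, ?_, ?_⟩, ?_⟩
    · rw [List.getLast?_cons_cons]; exact hlast
    · exact List.isChain_cons_cons.mpr ⟨hx, hch⟩
    · simp [walkLen]

/-- Extending a walk backwards along a zero-weight chain segment. -/
lemma subwalk {V : Type*} (E : V → V → Prop) (w : V → V → ℝ) (p : List V)
    (hch : p.Chain' E)
    (hzero : ∀ i, (h : i + 1 < p.length) → w (p[i]'(by omega)) (p[i+1]'h) = 0) :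
    ∀ d i, (hd : i + d < p.length) → ∀ l c, IsWalk E l (p[i+d]'hd) c →
      IsWalk E ((p.drop i).take d ++ l) (p[i]'(by omega)) c ∧
        walkLen w ((p.drop i).take d ++ l) = walkLen w l := by
  intro d
  induction d with
  | zero =>
    intro i hd l c h
    simp only [Nat.add_zero] at h
    simp only [List.take_zero, List.nil_append]
    exact ⟨h, trivial⟩
  | succ d ih =>
    intro i hd l c h
    have hi : i < p.length := by omega
    have heq : (p.drop i).take (d + 1) = p[i] :: (p.drop (i + 1)).take d := by
      rw [List.drop_eq_getElem_cons hi, List.take_succ_cons]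
    have hidx : p[i + (d + 1)]'hd = p[(i + 1) + d]'(by omega) := by
      simp only [show i + (d + 1) = (i + 1) + d from by omega]
    rw [hidx] at h
    obtain ⟨hw1, hw2⟩ := ih (i + 1) (by omega) l c h
    have edge : E p[i] (p[i+1]'(by omega)) := by
      have := List.isChain_iff_getElem.mp hch i (by omega)
      simpa using this
    obtain ⟨hc, hlen⟩ := walk_cons E w (a := p[i+1]'(by omega)) hw1 edge
    have wzero := hzero i (by omega)
    refine ⟨?_, ?_⟩ <;> rw [heq, List.cons_append]
    · exact hc
    · rw [hlen, hw2, wzero, zero_add]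

/-- Every vertex `b` of `P₂` with `b_f` defined admits a maximal pair
`(u, u_f) ∈ B` with `b ≤_{P₂} u` and `u_f = b_f`; consequently the subpath `P₂[b,u]`
followed by a walk from `u` to `u_f` of length at most `β` is a walk from `b` to `b_f`
of length at most `β`. -/
theorem stmt_6 {V : Type*} [Fintype V] [DecidableEq V] (E : V → V → Prop)
    (w : V → V → ℝ) (hw : ∀ x y, 0 ≤ w x y)
    (p₂ p₁ : List V) (hp₂nd : p₂.Nodup) (hp₂ch : p₂.Chain' E)
    (hp₂len : walkLen w p₂ = 0) (hp₁nd : p₁.Nodup)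
    (hdisj : ∀ x ∈ p₁, x ∉ p₂)
    (hnoout : ∀ x ∈ p₁, ∀ y, ¬ E x y)
    (hhead : ∀ x y, E x y → y ∈ p₂ → ∃ i, p₂[i]? = some x ∧ p₂[i+1]? = some y)
    (β : ℝ) (hβ : 0 < β)
    (b bf : V) (hb : b ∈ p₂) (hbf : IsDFirst E w b p₁ β bf) :
    ∃ u, MaximalPair E w p₂ p₁ β u bf ∧ p₂.idxOf b ≤ p₂.idxOf u ∧
      ∃ l, IsWalk E l u bf ∧ walkLen w l ≤ β ∧
        IsWalk E ((p₂.drop (p₂.idxOf b)).take (p₂.idxOf u - p₂.idxOf b) ++ l) b bf ∧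
        walkLen w ((p₂.drop (p₂.idxOf b)).take (p₂.idxOf u - p₂.idxOf b) ++ l) ≤ β := by
  classical
  -- all edges along p₂ have weight 0
  have hzero : ∀ i, (h : i + 1 < p₂.length) → w (p₂[i]'(by omega)) (p₂[i+1]'h) = 0 := by
    intro i hi
    have hi' : i < (p₂.zip p₂.tail).length := by
      rw [List.length_zip, List.length_tail]; omega
    have hmem : w (p₂[i]'(by omega)) (p₂[i+1]'hi) ∈
        (p₂.zip p₂.tail).map fun q => w q.1 q.2 := by
      refine List.mem_map.mpr ⟨(p₂.zip p₂.tail)[i], List.getElem_mem _, ?_⟩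
      rw [List.getElem_zip]
      simp [List.getElem_tail]
    have hnn : ∀ x ∈ (p₂.zip p₂.tail).map fun q => w q.1 q.2, 0 ≤ x := by
      intro x hx
      obtain ⟨q, _, rfl⟩ := List.mem_map.mp hx
      exact hw _ _
    have h1 := List.single_le_sum hnn _ hmem
    have h2 := hnn _ hmem
    rw [show ((p₂.zip p₂.tail).map fun q => w q.1 q.2).sum = walkLen w p₂ from rfl,
      hp₂len] at h1
    linarith
  -- pick the furthest vertex u on p₂ (at or after b) whose dfirst is ≤ bf in p₁
  set pred : V → Prop := fun v => v ∈ p₂ ∧ p₂.idxOf b ≤ p₂.idxOf v ∧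
    ∃ c, IsDFirst E w v p₁ β c ∧ p₁.idxOf c ≤ p₁.idxOf bf with hpred
  let s : Finset V := Finset.univ.filter pred
  have hbs : b ∈ s := by
    simp only [s, Finset.mem_filter, Finset.mem_univ, true_and, hpred]
    exact ⟨hb, le_refl _, bf, hbf, le_refl _⟩
  obtain ⟨u, hus, hmax⟩ := Finset.exists_max_image s (fun v => p₂.idxOf v) ⟨b, hbs⟩
  simp only [s, Finset.mem_filter, Finset.mem_univ, true_and, hpred] at hus
  obtain ⟨hu₂, hbu, c, hc, hcle⟩ := hus
  have hmax' : ∀ v, pred v → p₂.idxOf v ≤ p₂.idxOf u := by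
    intro v hv
    exact hmax v (by simp only [s, Finset.mem_filter, Finset.mem_univ, true_and]; exact hv)
  obtain ⟨hc₁, ⟨l, hl, hllen⟩, hcmin⟩ := hc
  -- index bookkeeping
  have hiblt : p₂.idxOf b < p₂.length := List.idxOf_lt_length_iff.mpr hb
  have hiult : p₂.idxOf u < p₂.length := List.idxOf_lt_length_iff.mpr hu₂
  have hbeq : p₂[p₂.idxOf b]'hiblt = b := List.getElem_idxOf hiblt
  have hueq : p₂[p₂.idxOf u]'hiult = u := List.getElem_idxOf hiult
  set i := p₂.idxOf b with hi
  set d := p₂.idxOf u - i with hd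
  have hidsum : i + d = p₂.idxOf u := by omega
  -- the concatenated walk from b to c
  have hstart : IsWalk E l (p₂[i + d]'(by omega)) c := by
    have : p₂[i + d]'(by omega) = u := by
      simp only [hidsum]; exact hueq
    rw [this]; exact hl
  obtain ⟨hwalkbc, hlenbc⟩ := subwalk E w p₂ hp₂ch hzero d i (by omega) l c hstart
  rw [hbeq] at hwalkbc
  -- c = bf
  have hcbf : c = bf := by
    have h1 : p₁.idxOf bf ≤ p₁.idxOf c :=
      hbf.2.2 c hc₁ ⟨_, hwalkbc, by rw [hlenbc]; exact hllen⟩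
    have h2 : p₁.idxOf c = p₁.idxOf bf := le_antisymm hcle h1
    have hcl : p₁.idxOf c < p₁.length := List.idxOf_lt_length_iff.mpr hc₁
    have hbl : p₁.idxOf bf < p₁.length := List.idxOf_lt_length_iff.mpr hbf.1
    calc c = p₁[p₁.idxOf c]'hcl := (List.getElem_idxOf hcl).symm
      _ = p₁[p₁.idxOf bf]'hbl := by simp only [h2]
      _ = bf := List.getElem_idxOf hbl
  subst hcbf
  refine ⟨u, ⟨hu₂, ⟨hc₁, ⟨l, hl, hllen⟩, hcmin⟩, ?_⟩, hbu, l, hl, hllen, hwalkbc,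
    by rw [hlenbc]; exact hllen⟩
  rintro ⟨u', uf', hu'₂, hlt, hdf, hle⟩
  have := hmax' u' ⟨hu'₂, by omega, uf', hdf, hle⟩
  omega
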